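/- Suppose L_s = U Λ_s Uᵀ and L_t = U Λ_t Uᵀ are real symmetric n×n matrices sharing the orthogonal eigenvector matrix U, with Λ_s = diag(λ_{s,1},…,λ_{s,n}) and Λ_t = diag(λ_{t,1},…,λ_{t,n}). Let g_θ be a polynomial satisfying |g_θ(λ_{s,i}) − g_θ(λ_{t,i})| ≤ C_λ |λ_{s,i} − λ_{t,i}| for all i, let σ : ℝ → ℝ satisfy |σ(b) − σ(a)| ≤ |b − a|, let X_s, X_t be n×d feature matrices with ‖X_s‖_F ≤ 1, and let W be a d×d' matrix with ‖W‖_op ≤ 1. Then the GNN outputs f(L, X) = σ(g_θ(L) X W) (σ applied entrywise) satisfy ‖f(L_s, X_s) − f(L_t, X_t)‖_F ≤ C_λ ‖L_s − L_t‖_F + (max_{1≤i≤n} |g_θ(λ_{t,i})|) ‖X_s − X_t‖_F. -/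

import Mathlib

open scoped Matrix

/-- Frobenius norm of a real matrix. -/
noncomputable def frobNorm {n m : ℕ} (A : Matrix (Fin n) (Fin m) ℝ) : ℝ :=
  Real.sqrt (∑ i, ∑ j, (A i j) ^ 2)

/-- Operator norm of a real matrix, induced by the Euclidean norms. -/
noncomputable def opNorm {n m : ℕ} (A : Matrix (Fin m) (Fin n) ℝ) : ℝ :=
  ‖(LinearMap.toContinuousLinearMap (Matrix.toEuclideanLin A))‖

/-- The polynomial filter `g_θ(λ) = ∑_{k=0}^{K} θ_k λ^k` applied to a scalar. -/
noncomputable def gpoly (K : ℕ) (θ : ℕ → ℝ) (x : ℝ) : ℝ :=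
  ∑ k ∈ Finset.range (K + 1), θ k * x ^ k

/-- The matrix polynomial filter `g_θ(L) = ∑_{k=0}^{K} θ_k L^k`. -/
noncomputable def gmat {n : ℕ} (K : ℕ) (θ : ℕ → ℝ) (L : Matrix (Fin n) (Fin n) ℝ) :
    Matrix (Fin n) (Fin n) ℝ :=
  ∑ k ∈ Finset.range (K + 1), θ k • L ^ k

section frob
attribute [local instance] Matrix.frobeniusNormedAddCommGroup

lemma frobNorm_eq_norm {n m : ℕ} (A : Matrix (Fin n) (Fin m) ℝ) : frobNorm A = ‖A‖ := by
  rw [Matrix.frobenius_norm_def, frobNorm, Real.sqrt_eq_rpow]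
  congr 1
  refine Finset.sum_congr rfl fun i _ => Finset.sum_congr rfl fun j _ => ?_
  rw [Real.norm_eq_abs, Real.rpow_two, sq_abs]

lemma frobNorm_nonneg {n m : ℕ} (A : Matrix (Fin n) (Fin m) ℝ) : 0 ≤ frobNorm A :=
  Real.sqrt_nonneg _

lemma frobNorm_triangle {n m : ℕ} (A B : Matrix (Fin n) (Fin m) ℝ) :
    frobNorm (A + B) ≤ frobNorm A + frobNorm B := by
  simp only [frobNorm_eq_norm]; exact norm_add_le A B

end frob

lemma frobNorm_transpose {n m : ℕ} (A : Matrix (Fin n) (Fin m) ℝ) :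
    frobNorm Aᵀ = frobNorm A := by
  unfold frobNorm
  rw [Finset.sum_comm]
  simp [Matrix.transpose_apply]

lemma sum_sq_eq_trace {n m : ℕ} (A : Matrix (Fin n) (Fin m) ℝ) :
    ∑ i, ∑ j, (A i j) ^ 2 = Matrix.trace (Aᵀ * A) := by
  rw [Finset.sum_comm]
  simp [Matrix.trace, Matrix.mul_apply, Matrix.diag, sq]

lemma frobNorm_unitary_left {n m : ℕ} (U : Matrix (Fin n) (Fin n) ℝ)
    (hU' : Uᵀ * U = 1) (M : Matrix (Fin n) (Fin m) ℝ) :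
    frobNorm (U * M) = frobNorm M := by
  unfold frobNorm
  rw [sum_sq_eq_trace, sum_sq_eq_trace (A := M)]
  rw [Matrix.transpose_mul, Matrix.mul_assoc, ← Matrix.mul_assoc Uᵀ U M, hU', Matrix.one_mul]

lemma frobNorm_unitary_right {n m : ℕ} (U : Matrix (Fin n) (Fin n) ℝ)
    (hU' : Uᵀ * U = 1) (M : Matrix (Fin m) (Fin n) ℝ) :
    frobNorm (M * Uᵀ) = frobNorm M := by
  rw [← frobNorm_transpose (M * Uᵀ), Matrix.transpose_mul, Matrix.transpose_transpose,
    frobNorm_unitary_left U hU' Mᵀ, frobNorm_transpose]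

section opn
open scoped Matrix.Norms.L2Operator

lemma opNorm_nonneg {n m : ℕ} (A : Matrix (Fin m) (Fin n) ℝ) : 0 ≤ opNorm A :=
  norm_nonneg _

lemma opNorm_eq_l2 {n m : ℕ} (A : Matrix (Fin m) (Fin n) ℝ) : opNorm A = ‖A‖ := rfl

lemma vecMul_bound {dd dd' : ℕ} (W : Matrix (Fin dd) (Fin dd') ℝ) (v : Fin dd → ℝ) :
    Real.sqrt (∑ j, (Matrix.vecMul v W) j ^ 2) ≤ opNorm W * Real.sqrt (∑ k, (v k) ^ 2) := by
  have h := Matrix.l2_opNorm_mulVec Wᵀ ((EuclideanSpace.equiv (Fin dd) ℝ).symm v)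
  have hT : ‖Wᵀ‖ = ‖W‖ := by
    rw [← Matrix.l2_opNorm_conjTranspose W]
    congr 1
  rw [hT] at h
  have h1 : ‖(EuclideanSpace.equiv (Fin dd') ℝ).symm (Wᵀ *ᵥ ((EuclideanSpace.equiv (Fin dd) ℝ).symm v))‖
      = Real.sqrt (∑ j, (Matrix.vecMul v W) j ^ 2) := by
    rw [EuclideanSpace.norm_eq]
    refine congrArg Real.sqrt (Finset.sum_congr rfl fun j _ => ?_)
    simp [EuclideanSpace.equiv, Matrix.mulVec_transpose,
      Matrix.vecMul, dotProduct, Real.norm_eq_abs, sq_abs]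
  have h2 : ‖(EuclideanSpace.equiv (Fin dd) ℝ).symm v‖ = Real.sqrt (∑ k, (v k) ^ 2) := by
    rw [EuclideanSpace.norm_eq]
    refine congrArg Real.sqrt (Finset.sum_congr rfl fun k _ => ?_)
    simp [EuclideanSpace.equiv, Real.norm_eq_abs, sq_abs]
  rw [h1, h2] at h
  exact h

lemma frobNorm_mul_op {nn dd dd' : ℕ} (X : Matrix (Fin nn) (Fin dd) ℝ)
    (W : Matrix (Fin dd) (Fin dd') ℝ) :
    frobNorm (X * W) ≤ frobNorm X * opNorm W := by
  have hrow : ∀ i, ∑ j, ((X * W) i j) ^ 2 ≤ opNorm W ^ 2 * ∑ k, (X i k) ^ 2 := by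
    intro i
    have h := vecMul_bound W (X i)
    have hs : ∑ j, ((X * W) i j) ^ 2 = ∑ j, (Matrix.vecMul (X i) W j) ^ 2 := by
      refine Finset.sum_congr rfl fun j _ => ?_
      simp [Matrix.mul_apply, Matrix.vecMul, dotProduct]
    rw [hs]
    have ha : (0:ℝ) ≤ ∑ j, (Matrix.vecMul (X i) W j) ^ 2 :=
      Finset.sum_nonneg fun j _ => sq_nonneg _
    have := pow_le_pow_left₀ (Real.sqrt_nonneg _) h 2
    rw [Real.sq_sqrt ha, mul_pow, Real.sq_sqrt (Finset.sum_nonneg fun k _ => sq_nonneg _)] at this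
    linarith
  have hsum : ∑ i, ∑ j, ((X * W) i j) ^ 2 ≤ opNorm W ^ 2 * ∑ i, ∑ k, (X i k) ^ 2 := by
    rw [Finset.mul_sum]
    exact Finset.sum_le_sum fun i _ => hrow i
  unfold frobNorm
  calc Real.sqrt (∑ i, ∑ j, ((X * W) i j) ^ 2)
      ≤ Real.sqrt (opNorm W ^ 2 * ∑ i, ∑ k, (X i k) ^ 2) := Real.sqrt_le_sqrt hsum
    _ = opNorm W * Real.sqrt (∑ i, ∑ k, (X i k) ^ 2) := by
        rw [Real.sqrt_mul (sq_nonneg _), Real.sqrt_sq (opNorm_nonneg W)]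
    _ = Real.sqrt (∑ i, ∑ k, (X i k) ^ 2) * opNorm W := mul_comm _ _

end opn

lemma gmat_diagonal {n : ℕ} (K : ℕ) (θ : ℕ → ℝ) (lam : Fin n → ℝ) :
    gmat K θ (Matrix.diagonal lam) = Matrix.diagonal (fun i => gpoly K θ (lam i)) := by
  ext i j
  by_cases hij : i = j
  · subst hij
    simp [gmat, gpoly, Matrix.diagonal_pow, Matrix.sum_apply, Matrix.smul_apply,
      Matrix.diagonal_apply_eq, Pi.pow_apply, smul_eq_mul]
  · simp [gmat, gpoly, Matrix.diagonal_pow, Matrix.sum_apply, Matrix.smul_apply,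
      Matrix.diagonal_apply_ne _ hij]

lemma gmat_conj {n : ℕ} (K : ℕ) (θ : ℕ → ℝ) (U D : Matrix (Fin n) (Fin n) ℝ)
    (hU : U * Uᵀ = 1) (hU' : Uᵀ * U = 1) :
    gmat K θ (U * D * Uᵀ) = U * gmat K θ D * Uᵀ := by
  have hpow : ∀ k : ℕ, (U * D * Uᵀ) ^ k = U * D ^ k * Uᵀ := by
    intro k
    induction k with
    | zero => simp [pow_zero, hU]
    | succ k ih =>
        rw [pow_succ, ih, pow_succ]
        rw [Matrix.mul_assoc (U * D ^ k) Uᵀ (U * D * Uᵀ)]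
        rw [← Matrix.mul_assoc Uᵀ (U * D) Uᵀ, ← Matrix.mul_assoc Uᵀ U D, hU', Matrix.one_mul]
        rw [← Matrix.mul_assoc (U * D ^ k) D Uᵀ, Matrix.mul_assoc U (D ^ k) D]
  unfold gmat
  rw [Finset.mul_sum, Finset.sum_mul]
  refine Finset.sum_congr rfl fun k _ => ?_
  rw [hpow k, Matrix.mul_smul, Matrix.smul_mul]

lemma sum_sq_diag_mul {n m : ℕ} (g : Fin n → ℝ) (Y : Matrix (Fin n) (Fin m) ℝ) :
    ∑ i, ∑ j, ((Matrix.diagonal g * Y) i j) ^ 2 = ∑ i, (g i) ^ 2 * ∑ j, (Y i j) ^ 2 := by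
  refine Finset.sum_congr rfl fun i _ => ?_
  rw [Finset.mul_sum]
  refine Finset.sum_congr rfl fun j _ => ?_
  rw [Matrix.diagonal_mul]
  ring

lemma sum_sq_diagonal {n : ℕ} (f : Fin n → ℝ) :
    ∑ i, ∑ j, ((Matrix.diagonal f) i j) ^ 2 = ∑ i, (f i) ^ 2 := by
  refine Finset.sum_congr rfl fun i _ => ?_
  rw [Finset.sum_eq_single i]
  · rw [Matrix.diagonal_apply_eq]
  · intro j _ hji
    rw [Matrix.diagonal_apply_ne' _ hji]
    simp
  · intro h; exact absurd (Finset.mem_univ i) h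

lemma sqrt_sq_mul (c s : ℝ) (hs : 0 ≤ s) : Real.sqrt (c ^ 2 * s) = |c| * Real.sqrt s := by
  rw [Real.sqrt_mul (sq_nonneg c), Real.sqrt_sq_eq_abs]

/-- aligned-eigenbasis case of the SA-GDA stability lemma. For GNN layers
`f(L, X) = σ(g_θ(L) X W)` with shared eigenvector matrix `U`, a spectrally `C`-Lipschitz
polynomial filter, a 1-Lipschitz pointwise nonlinearity, `‖X_s‖_F ≤ 1` and `‖W‖_op ≤ 1`:
`‖f(L_s,X_s) − f(L_t,X_t)‖_F ≤ C ‖L_s − L_t‖_F + (max_i |g_θ(λ_{t,i})|) ‖X_s − X_t‖_F`. -/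
theorem stmt_4 {n d d' : ℕ} (hn : 0 < n) (K : ℕ) (θ : ℕ → ℝ)
    (U : Matrix (Fin n) (Fin n) ℝ) (hU : U * Uᵀ = 1) (hU' : Uᵀ * U = 1)
    (lams lamt : Fin n → ℝ) (Ls Lt : Matrix (Fin n) (Fin n) ℝ)
    (hLs : Ls = U * Matrix.diagonal lams * Uᵀ)
    (hLt : Lt = U * Matrix.diagonal lamt * Uᵀ)
    (C : ℝ)
    (hC : ∀ i, |gpoly K θ (lams i) - gpoly K θ (lamt i)| ≤ C * |lams i - lamt i|)
    (σ : ℝ → ℝ) (hσ : ∀ a b : ℝ, |σ b - σ a| ≤ |b - a|)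
    (Xs Xt : Matrix (Fin n) (Fin d) ℝ) (hXs : frobNorm Xs ≤ 1)
    (W : Matrix (Fin d) (Fin d') ℝ) (hW : opNorm W ≤ 1) :
    frobNorm ((gmat K θ Ls * Xs * W).map σ - (gmat K θ Lt * Xt * W).map σ)
      ≤ C * frobNorm (Ls - Lt)
        + (Finset.univ.sup'
            (⟨⟨0, hn⟩, Finset.mem_univ _⟩ : (Finset.univ : Finset (Fin n)).Nonempty)
            (fun i => |gpoly K θ (lamt i)|)) * frobNorm (Xs - Xt) := by
  classical
  set M : ℝ := Finset.univ.sup'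
      (⟨⟨0, hn⟩, Finset.mem_univ _⟩ : (Finset.univ : Finset (Fin n)).Nonempty)
      (fun i => |gpoly K θ (lamt i)|) with hMdef
  set gs : Fin n → ℝ := fun i => gpoly K θ (lams i) with hgs_def
  set gt : Fin n → ℝ := fun i => gpoly K θ (lamt i) with hgt_def
  set Ds : Matrix (Fin n) (Fin n) ℝ := Matrix.diagonal gs with hDs
  set Dt : Matrix (Fin n) (Fin n) ℝ := Matrix.diagonal gt with hDt
  set Ys : Matrix (Fin n) (Fin d') ℝ := Uᵀ * (Xs * W) with hYs_def
  set Yt : Matrix (Fin n) (Fin d') ℝ := Uᵀ * (Xt * W) with hYt_def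
  have hUU : Uᵀᵀ * Uᵀ = 1 := by rwa [Matrix.transpose_transpose]
  have hgmats : gmat K θ Ls = U * Ds * Uᵀ := by
    rw [hLs, gmat_conj _ _ _ _ hU hU', gmat_diagonal]
  have hgmatt : gmat K θ Lt = U * Dt * Uᵀ := by
    rw [hLt, gmat_conj _ _ _ _ hU hU', gmat_diagonal]
  -- Step 0 : sigma is a contraction entrywise
  have hstep0 : frobNorm ((gmat K θ Ls * Xs * W).map σ - (gmat K θ Lt * Xt * W).map σ)
      ≤ frobNorm (gmat K θ Ls * Xs * W - gmat K θ Lt * Xt * W) := by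
    unfold frobNorm
    apply Real.sqrt_le_sqrt
    refine Finset.sum_le_sum fun i _ => Finset.sum_le_sum fun j _ => ?_
    simp only [Matrix.sub_apply, Matrix.map_apply]
    have h := hσ ((gmat K θ Lt * Xt * W) i j) ((gmat K θ Ls * Xs * W) i j)
    calc (σ ((gmat K θ Ls * Xs * W) i j) - σ ((gmat K θ Lt * Xt * W) i j)) ^ 2
        = |σ ((gmat K θ Ls * Xs * W) i j) - σ ((gmat K θ Lt * Xt * W) i j)| ^ 2 := (sq_abs _).symm
      _ ≤ |(gmat K θ Ls * Xs * W) i j - (gmat K θ Lt * Xt * W) i j| ^ 2 :=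
          pow_le_pow_left₀ (abs_nonneg _) h 2
      _ = ((gmat K θ Ls * Xs * W) i j - (gmat K θ Lt * Xt * W) i j) ^ 2 := sq_abs _
  -- rewrite the difference in the eigenbasis
  have hdiff : gmat K θ Ls * Xs * W - gmat K θ Lt * Xt * W = U * (Ds * Ys - Dt * Yt) := by
    rw [hgmats, hgmatt, hYs_def, hYt_def, Matrix.mul_sub]
    simp only [Matrix.mul_assoc]
  have hsplit : Ds * Ys - Dt * Yt = (Ds - Dt) * Ys + Dt * (Ys - Yt) := by
    rw [Matrix.sub_mul, Matrix.mul_sub]; abel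
  -- sum-of-squares of Ys is at most 1
  have hfYs : frobNorm Ys ≤ 1 := by
    rw [hYs_def, frobNorm_unitary_left Uᵀ hUU]
    calc frobNorm (Xs * W) ≤ frobNorm Xs * opNorm W := frobNorm_mul_op _ _
      _ ≤ 1 * 1 := mul_le_mul hXs hW (opNorm_nonneg W) zero_le_one
      _ = 1 := mul_one 1
  have hSYs : ∑ i, ∑ j, (Ys i j) ^ 2 ≤ 1 := by
    have h0 : (0:ℝ) ≤ ∑ i, ∑ j, (Ys i j) ^ 2 :=
      Finset.sum_nonneg fun i _ => Finset.sum_nonneg fun j _ => sq_nonneg _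
    have h1 : Real.sqrt (∑ i, ∑ j, (Ys i j) ^ 2) ≤ 1 := hfYs
    have h2 := Real.sq_sqrt h0
    nlinarith [Real.sqrt_nonneg (∑ i, ∑ j, (Ys i j) ^ 2)]
  have hrowYs : ∀ i, ∑ j, (Ys i j) ^ 2 ≤ 1 := by
    intro i
    refine le_trans ?_ hSYs
    exact Finset.single_le_sum (f := fun i => ∑ j, (Ys i j) ^ 2)
      (fun i _ => Finset.sum_nonneg fun j _ => sq_nonneg _) (Finset.mem_univ i)
  -- frobNorm (Ls - Lt) in the eigenbasis
  have hLdiff : frobNorm (Ls - Lt) = Real.sqrt (∑ i, (lams i - lamt i) ^ 2) := by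
    have : Ls - Lt = U * Matrix.diagonal (fun i => lams i - lamt i) * Uᵀ := by
      rw [hLs, hLt, ← Matrix.sub_mul, ← Matrix.mul_sub, Matrix.diagonal_sub]
    rw [this, frobNorm_unitary_right U hU', frobNorm_unitary_left U hU']
    unfold frobNorm
    rw [sum_sq_diagonal]
  -- term 1
  have hterm1 : frobNorm ((Ds - Dt) * Ys) ≤ C * frobNorm (Ls - Lt) := by
    have hDsub : Ds - Dt = Matrix.diagonal (fun i => gs i - gt i) := by
      rw [hDs, hDt, Matrix.diagonal_sub]
    have hS : ∑ i, ∑ j, (((Ds - Dt) * Ys) i j) ^ 2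
        ≤ C ^ 2 * ∑ i, (lams i - lamt i) ^ 2 := by
      rw [hDsub, sum_sq_diag_mul, Finset.mul_sum]
      refine Finset.sum_le_sum fun i _ => ?_
      have hga : (gs i - gt i) ^ 2 ≤ C ^ 2 * (lams i - lamt i) ^ 2 := by
        have h := pow_le_pow_left₀ (abs_nonneg _) (hC i) 2
        rw [sq_abs] at h
        calc (gs i - gt i) ^ 2 ≤ (C * |lams i - lamt i|) ^ 2 := h
          _ = C ^ 2 * (lams i - lamt i) ^ 2 := by rw [mul_pow, sq_abs]
      have hr := hrowYs i
      have hrn : (0:ℝ) ≤ ∑ j, (Ys i j) ^ 2 := Finset.sum_nonneg fun j _ => sq_nonneg _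
      calc (gs i - gt i) ^ 2 * ∑ j, (Ys i j) ^ 2
          ≤ (C ^ 2 * (lams i - lamt i) ^ 2) * 1 :=
            mul_le_mul hga hr hrn (by positivity)
        _ = C ^ 2 * (lams i - lamt i) ^ 2 := mul_one _
    have habs : frobNorm ((Ds - Dt) * Ys) ≤ |C| * frobNorm (Ls - Lt) := by
      rw [hLdiff]
      calc frobNorm ((Ds - Dt) * Ys)
          ≤ Real.sqrt (C ^ 2 * ∑ i, (lams i - lamt i) ^ 2) := Real.sqrt_le_sqrt hS
        _ = |C| * Real.sqrt (∑ i, (lams i - lamt i) ^ 2) :=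
            sqrt_sq_mul C _ (Finset.sum_nonneg fun i _ => sq_nonneg _)
    rcases le_or_gt 0 C with hc | hc
    · rwa [abs_of_nonneg hc] at habs
    · have hz : ∀ i, lams i = lamt i := by
        intro i
        by_contra hne
        have h1 : 0 < |lams i - lamt i| := abs_pos.mpr (sub_ne_zero.mpr hne)
        have h2 := hC i
        nlinarith [abs_nonneg (gpoly K θ (lams i) - gpoly K θ (lamt i))]
      have hzero : frobNorm (Ls - Lt) = 0 := by
        rw [hLdiff]
        have : ∑ i, (lams i - lamt i) ^ 2 = 0 := by
          refine Finset.sum_eq_zero fun i _ => ?_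
          rw [hz i]; ring
        rw [this, Real.sqrt_zero]
      rw [hzero, mul_zero] at habs ⊢
      exact habs
  -- term 2
  have hMnn : ∀ i, |gt i| ≤ M :=
    fun i => Finset.le_sup' (fun i => |gpoly K θ (lamt i)|) (Finset.mem_univ i)
  have hM0 : 0 ≤ M := le_trans (abs_nonneg _) (hMnn ⟨0, hn⟩)
  have hterm2 : frobNorm (Dt * (Ys - Yt)) ≤ M * frobNorm (Xs - Xt) := by
    have hS : ∑ i, ∑ j, ((Dt * (Ys - Yt)) i j) ^ 2
        ≤ M ^ 2 * ∑ i, ∑ j, ((Ys - Yt) i j) ^ 2 := by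
      rw [hDt, sum_sq_diag_mul, Finset.mul_sum]
      refine Finset.sum_le_sum fun i _ => ?_
      have hg2 : (gt i) ^ 2 ≤ M ^ 2 := by
        have := pow_le_pow_left₀ (abs_nonneg _) (hMnn i) 2
        rwa [sq_abs] at this
      exact mul_le_mul_of_nonneg_right hg2 (Finset.sum_nonneg fun j _ => sq_nonneg _) |>.trans
        (le_of_eq rfl)
    have hYdiff : Ys - Yt = Uᵀ * ((Xs - Xt) * W) := by
      rw [hYs_def, hYt_def, ← Matrix.mul_sub, ← Matrix.sub_mul]
    have hfYd : frobNorm (Ys - Yt) ≤ frobNorm (Xs - Xt) := by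
      rw [hYdiff, frobNorm_unitary_left Uᵀ hUU]
      calc frobNorm ((Xs - Xt) * W) ≤ frobNorm (Xs - Xt) * opNorm W := frobNorm_mul_op _ _
        _ ≤ frobNorm (Xs - Xt) * 1 :=
            mul_le_mul_of_nonneg_left hW (frobNorm_nonneg _)
        _ = frobNorm (Xs - Xt) := mul_one _
    calc frobNorm (Dt * (Ys - Yt))
        ≤ Real.sqrt (M ^ 2 * ∑ i, ∑ j, ((Ys - Yt) i j) ^ 2) := Real.sqrt_le_sqrt hS
      _ = |M| * frobNorm (Ys - Yt) := sqrt_sq_mul M _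
          (Finset.sum_nonneg fun i _ => Finset.sum_nonneg fun j _ => sq_nonneg _)
      _ = M * frobNorm (Ys - Yt) := by rw [abs_of_nonneg hM0]
      _ ≤ M * frobNorm (Xs - Xt) := mul_le_mul_of_nonneg_left hfYd hM0
  -- put everything together
  calc frobNorm ((gmat K θ Ls * Xs * W).map σ - (gmat K θ Lt * Xt * W).map σ)
      ≤ frobNorm (gmat K θ Ls * Xs * W - gmat K θ Lt * Xt * W) := hstep0
    _ = frobNorm (Ds * Ys - Dt * Yt) := by rw [hdiff, frobNorm_unitary_left U hU']
    _ = frobNorm ((Ds - Dt) * Ys + Dt * (Ys - Yt)) := by rw [hsplit]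
    _ ≤ frobNorm ((Ds - Dt) * Ys) + frobNorm (Dt * (Ys - Yt)) := frobNorm_triangle _ _
    _ ≤ C * frobNorm (Ls - Lt) + M * frobNorm (Xs - Xt) := add_le_add hterm1 hterm2
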